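/- Let A be a finite alphabet, let F ⊆ A* be a recurrent set, and let X be a rational F-maximal bifix code. Let u ∈ F. Then u has rank d_F(X) in the minimal automaton of X* if and only if η_{X*}(u) ∈ J_F(X). Moreover, if δ_X(u) = d_F(X), then u has rank d_F(X) in the minimal automaton of X*. -/

import Mathlib

/-! Common definitions: words over a finite alphabet `A` are terms of `List A`,
concatenation being the monoid operation of the free monoid `A*`. -/

namespace PaperDefs

variable {A : Type*}

/-- `w` belongs to the Kleene star `X*` of `X`: it is a (possibly empty)
concatenation of elements of `X`. -/
def InStar (X : Set (List A)) (w : List A) : Prop :=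
  ∃ l : List (List A), (∀ u ∈ l, u ∈ X) ∧ l.flatten = w

/-- The language `X*`. -/
def star (X : Set (List A)) : Set (List A) := {w | InStar X w}

/-- A prefix code: a nonempty set of nonempty words, none of which is a proper
prefix of another. -/
def IsPrefixCode (X : Set (List A)) : Prop :=
  X.Nonempty ∧ (∀ w ∈ X, w ≠ []) ∧ ∀ u ∈ X, ∀ v ∈ X, u <+: v → u = v

/-- A suffix code. -/
def IsSuffixCode (X : Set (List A)) : Prop :=
  X.Nonempty ∧ (∀ w ∈ X, w ≠ []) ∧ ∀ u ∈ X, ∀ v ∈ X, u <:+ v → u = v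

/-- A bifix code. -/
def IsBifixCode (X : Set (List A)) : Prop := IsPrefixCode X ∧ IsSuffixCode X

/-- A factorial set contains all factors of its elements. -/
def Factorial (F : Set (List A)) : Prop := ∀ w ∈ F, ∀ u, u <:+: w → u ∈ F

/-- A recurrent set. -/
def Recurrent (F : Set (List A)) : Prop :=
  Factorial F ∧ F.Nonempty ∧ F ≠ {[]} ∧ ∀ u ∈ F, ∀ v ∈ F, ∃ w, u ++ w ++ v ∈ F

/-- A uniformly recurrent set. -/
def UniformlyRecurrent (F : Set (List A)) : Prop :=
  Recurrent F ∧ ∀ u ∈ F, ∃ n : ℕ, ∀ w ∈ F, n ≤ w.length → u <:+: w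

/-- A parse of `w` with respect to `X` : a triple `(v, x, u)` with `w = v x u`,
`v` has no suffix in `X`, `x ∈ X*`, and `u` has no prefix in `X`. -/
def IsParse (X : Set (List A)) (w : List A) (p : List A × List A × List A) : Prop :=
  p.1 ++ p.2.1 ++ p.2.2 = w ∧ (¬ ∃ s ∈ X, s <:+ p.1) ∧ InStar X p.2.1 ∧
    ¬ ∃ s ∈ X, s <+: p.2.2

/-- `δ_X(w)`, the number of parses of `w` with respect to `X`. -/
noncomputable def delta (X : Set (List A)) (w : List A) : ℕ :=
  {p | IsParse X w p}.ncard

/-- The `F`-degree `d_F(X)` of `X`, as an extended natural number. -/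
noncomputable def Fdeg (X F : Set (List A)) : ℕ∞ :=
  ⨆ w ∈ F, (delta X w : ℕ∞)

/-- The degree `d(X)` of `X`. -/
noncomputable def deg (X : Set (List A)) : ℕ∞ := Fdeg X Set.univ

/-- An `F`-maximal bifix code. -/
def IsFMaximalBifixCode (F X : Set (List A)) : Prop :=
  IsBifixCode X ∧ X ⊆ F ∧ ∀ Y : Set (List A), IsBifixCode Y → Y ⊆ F → X ⊆ Y → Y = X

/-- An `F`-maximal prefix code. -/
def IsFMaximalPrefixCode (F X : Set (List A)) : Prop :=
  IsPrefixCode X ∧ X ⊆ F ∧ ∀ Y : Set (List A), IsPrefixCode Y → Y ⊆ F → X ⊆ Y → Y = X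

/-- `X` is `F`-thin: some word of `F` is not a factor of any element of `X`. -/
def FThin (F X : Set (List A)) : Prop := ∃ w ∈ F, ∀ x ∈ X, ¬ w <:+: x

/-- A rational (regular) language. -/
def IsRational (L : Set (List A)) : Prop :=
  ∃ (σ : Type) (_ : Fintype σ) (M : DFA A σ), ∀ w : List A, w ∈ M.accepts ↔ w ∈ L

/-- The syntactic congruence of the language `L`. -/
def SynEquiv (L : Set (List A)) (u v : List A) : Prop :=
  ∀ x y : List A, x ++ u ++ y ∈ L ↔ x ++ v ++ y ∈ L

/-- `η : A* → M` is (a realization of) the syntactic homomorphism onto the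
syntactic monoid of `L`. -/
structure IsSyntacticHom (L : Set (List A)) {M : Type*} [Monoid M] (η : List A → M) : Prop where
  map_nil : η [] = 1
  map_append : ∀ u v : List A, η (u ++ v) = η u * η v
  surj : Function.Surjective η
  syn : ∀ u v : List A, η u = η v ↔ SynEquiv L u v

section Green

variable {M : Type*} [Monoid M]

/-- The `J`-order: `MuM ⊆ MvM`. -/
def JLe (u v : M) : Prop := ∃ x y, u = x * v * y

/-- Green's relation `J`. -/
def JEquiv (u v : M) : Prop := JLe u v ∧ JLe v u

/-- Green's relation `R`. -/
def REquiv (u v : M) : Prop := (∃ x, v = u * x) ∧ (∃ x, u = v * x)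

/-- Green's relation `L`. -/
def LEquiv (u v : M) : Prop := (∃ x, v = x * u) ∧ (∃ x, u = x * v)

/-- Green's relation `H`. -/
def HEquiv (u v : M) : Prop := REquiv u v ∧ LEquiv u v

/-- Green's relation `D`. -/
def DEquiv (u v : M) : Prop := ∃ s, REquiv u s ∧ LEquiv s v

/-- The `H`-class of an element. -/
def HClass (e : M) : Set M := {m | HEquiv m e}

/-- Membership in the minimum ideal (minimum `J`-class) of `M`. -/
def InMinIdeal (m : M) : Prop := ∀ n : M, JLe m n

/-- `S` is a subgroup of the monoid `M`: a subsemigroup which is a group. -/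
def IsSubgroupIn (S : Set M) : Prop :=
  S.Nonempty ∧ (∀ x ∈ S, ∀ y ∈ S, x * y ∈ S) ∧
    ∃ e ∈ S, (∀ x ∈ S, e * x = x ∧ x * e = x) ∧ ∀ x ∈ S, ∃ y ∈ S, x * y = e ∧ y * x = e

/-- The subsets `S ⊆ M` and `T ⊆ N` (each closed under multiplication, e.g.
maximal subgroups) are isomorphic as groups: there is a multiplicative
bijection from `S` onto `T`. -/
def GroupIsoOn {N : Type*} [Monoid N] (S : Set M) (T : Set N) : Prop :=
  ∃ φ : M → N, Set.BijOn φ S T ∧ ∀ x ∈ S, ∀ y ∈ S, φ (x * y) = φ x * φ y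

end Green

/-- `m` belongs to `J_F(X)`, the minimum `J`-class of the syntactic monoid of
`X*` meeting the image of `F` under the syntactic homomorphism `η`. -/
def InFMinJ {M : Type*} [Monoid M] (η : List A → M) (F : Set (List A)) (m : M) : Prop :=
  (∃ w ∈ F, JEquiv m (η w)) ∧ ∀ w ∈ F, JLe m (η w)

/-- A group code: a prefix code `Z` defined by a transitive permutation
representation of `A*` on a finite set, `Z*` being the stabilizer of a point. -/
def IsGroupCode (Z : Set (List A)) : Prop :=
  IsPrefixCode Z ∧
  ∃ (Q : Type) (_ : Fintype Q) (q₀ : Q) (α : List A → Equiv.Perm Q),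
    α [] = 1 ∧ (∀ u v : List A, α (u ++ v) = α u * α v) ∧
    (∀ q q' : Q, ∃ w : List A, α w q = q') ∧
    (∀ w : List A, InStar Z w ↔ α w q₀ = q₀) ∧
    Z = {w : List A | α w q₀ = q₀ ∧ w ≠ [] ∧
          ¬ ∃ u v : List A, u ≠ [] ∧ v ≠ [] ∧ α u q₀ = q₀ ∧ α v q₀ = q₀ ∧ w = u ++ v}

/-- Vertices of the extension graph of `w` in `F`: the disjoint union of
`L(w)` and `R(w)`. -/
def ExtVertex (F : Set (List A)) (w : List A) : Sum A A → Prop :=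
  fun x => Sum.elim (fun a => a :: w ∈ F) (fun b => w ++ [b] ∈ F) x

/-- The edge relation of the extension graph of `w` in `F`. -/
def ExtRel (F : Set (List A)) (w : List A) : Sum A A → Sum A A → Prop :=
  fun x y =>
    match x, y with
    | Sum.inl a, Sum.inr b => a :: (w ++ [b]) ∈ F
    | _, _ => False

/-- The extension graph `G(w)` of `w` in `F`. -/
def extGraph (F : Set (List A)) (w : List A) :
    SimpleGraph {x : Sum A A // ExtVertex F w x} :=
  SimpleGraph.fromRel fun x y => ExtRel F w x.1 y.1

/-- `F` is connected: every extension graph of a word of `F` is connected. -/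
def ConnectedSet (F : Set (List A)) : Prop :=
  ∀ w ∈ F, (extGraph F w).Connected

/-- `F` is a tree set: every extension graph of a word of `F` is a tree. -/
def TreeSet (F : Set (List A)) : Prop :=
  ∀ w ∈ F, (extGraph F w).IsTree

/-- The alphabet of `F` is the whole of `A`. -/
def AlphabetIs (F : Set (List A)) : Prop := ∀ a : A, [a] ∈ F

/-- The left quotient `u⁻¹L`, i.e. the state reached from the initial state of
the minimal automaton of `L` by reading `u`. -/
def leftQuot (L : Set (List A)) (u : List A) : Set (List A) := {w | u ++ w ∈ L}

/-- The set of states of the minimal automaton of `L`: the nonempty left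
quotients of `L`. -/
def MinStates (L : Set (List A)) : Set (Set (List A)) :=
  {q | q.Nonempty ∧ ∃ u : List A, q = leftQuot L u}

/-- The (partial) transition of the minimal automaton: `q · v`; it is defined
when the resulting set is nonempty. -/
def stepW (q : Set (List A)) (v : List A) : Set (List A) := {w | v ++ w ∈ q}

/-- The rank of the word `v` in the minimal automaton of `L`: the number of
distinct states `q · v` with `q` a state such that `q · v` is defined. -/
noncomputable def wordRank (L : Set (List A)) (v : List A) : ℕ :=
  ((fun q => stepW q v) '' {q ∈ MinStates L | (stepW q v).Nonempty}).ncard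

/-- The set of first return words of `F` to `u`. -/
def ReturnWords (F : Set (List A)) (u : List A) : Set (List A) :=
  {v | v ≠ [] ∧ u ++ v ∈ F ∧ u <:+ u ++ v ∧
    ¬ ∃ x y : List A, x ≠ [] ∧ y ≠ [] ∧ u ++ v = x ++ u ++ y}

/-- A code: every word has at most one factorization into elements of `X`. -/
def IsCode (X : Set (List A)) : Prop :=
  ∀ l m : List (List A), (∀ u ∈ l, u ∈ X) → (∀ u ∈ m, u ∈ X) →
    l.flatten = m.flatten → l = m

/-- The set `I = Q_X · K` of images of states of the minimal automaton of `L`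
under (partial) transitions by words whose syntactic image lies in `K`. -/
def ImageSet (L : Set (List A)) {M : Type*} [Monoid M] (η : List A → M) (K : Set M) :
    Set (Set (List A)) :=
  {p | ∃ q ∈ MinStates L, ∃ v : List A, η v ∈ K ∧ (stepW q v).Nonempty ∧ p = stepW q v}

/-- A witness for "a finite monoid `M` together with a monoid homomorphism
`A* → M`". -/
structure FiniteMonoidHomWitness (A : Type*) where
  M : Type
  [fin : Fintype M]
  [mon : Monoid M]
  φ : List A → M
  map_nil : φ [] = 1
  map_append : ∀ u v : List A, φ (u ++ v) = φ u * φ v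

end PaperDefs
namespace Stmt13Aux
open PaperDefs

variable {A : Type*}

theorem star_nil (X : Set (List A)) : ([] : List A) ∈ star X := ⟨[], by simp, rfl⟩

theorem star_single {X : Set (List A)} {x : List A} (hx : x ∈ X) : x ∈ star X :=
  ⟨[x], by simpa using hx, by simp⟩

theorem star_append {X : Set (List A)} {a b : List A} (ha : a ∈ star X) (hb : b ∈ star X) :
    a ++ b ∈ star X := by
  obtain ⟨l, hl, rfl⟩ := ha
  obtain ⟨m, hm, rfl⟩ := hb
  refine ⟨l ++ m, ?_, by simp⟩
  intro u hu
  rcases List.mem_append.1 hu with h | h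
  exacts [hl u h, hm u h]

theorem star_cons {X : Set (List A)} {x r : List A} (hx : x ∈ X) (hr : r ∈ star X) :
    x ++ r ∈ star X := star_append (star_single hx) hr

theorem star_cons_cancel {X : Set (List A)} (hP : IsPrefixCode X) {x r : List A} (hx : x ∈ X)
    (h : x ++ r ∈ star X) : r ∈ star X := by
  obtain ⟨m, hm, hflat⟩ := h
  cases m with
  | nil =>
    exfalso
    simp only [List.flatten_nil] at hflat
    exact hP.2.1 x hx (List.append_eq_nil_iff.1 hflat.symm).1
  | cons y m' =>
    have hy : y ∈ X := hm y (by simp)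
    have hflat' : y ++ m'.flatten = x ++ r := by simpa using hflat
    have h1 : y <+: x ++ r := ⟨m'.flatten, hflat'⟩
    have h2 : x <+: x ++ r := ⟨r, rfl⟩
    have hxy : y = x := by
      rcases List.prefix_or_prefix_of_prefix h1 h2 with h | h
      · exact hP.2.2 y hy x hx h
      · exact (hP.2.2 x hx y hy h).symm
    subst hxy
    have : m'.flatten = r := List.append_cancel_left hflat'
    exact ⟨m', fun u hu => hm u (by simp [hu]), this⟩

/-- right-unitarity of `X*` for a prefix code. -/
theorem star_unit_right {X : Set (List A)} (hP : IsPrefixCode X) {p q : List A}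
    (hp : p ∈ star X) (hpq : p ++ q ∈ star X) : q ∈ star X := by
  obtain ⟨l, hl, rfl⟩ := hp
  induction l with
  | nil => simpa using hpq
  | cons x l ih =>
    have hx : x ∈ X := hl x (by simp)
    have : x ++ (l.flatten ++ q) ∈ star X := by
      simpa [List.append_assoc] using hpq
    exact ih (fun u hu => hl u (by simp [hu])) (star_cons_cancel hP hx this)

theorem star_first {X : Set (List A)} {w : List A} (hw : w ∈ star X) (hne : w ≠ []) :
    ∃ x ∈ X, ∃ r ∈ star X, w = x ++ r := by
  obtain ⟨l, hl, rfl⟩ := hw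
  cases l with
  | nil => simp at hne
  | cons x l' =>
    exact ⟨x, hl x (by simp), l'.flatten, ⟨l', fun u hu => hl u (by simp [hu]), rfl⟩, by simp⟩

/-! ### Reversal -/

def revS (X : Set (List A)) : Set (List A) := {w | w.reverse ∈ X}

@[simp] theorem mem_revS {X : Set (List A)} {w : List A} : w ∈ revS X ↔ w.reverse ∈ X := Iff.rfl

@[simp] theorem revS_revS (X : Set (List A)) : revS (revS X) = X := by
  ext w; simp [revS]

theorem instar_rev {X : Set (List A)} {w : List A} (h : InStar X w) :
    InStar (revS X) w.reverse := by
  obtain ⟨l, hl, rfl⟩ := h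
  refine ⟨(l.map List.reverse).reverse, ?_, List.reverse_flatten.symm⟩
  intro u hu
  simp only [List.mem_reverse, List.mem_map] at hu
  obtain ⟨v, hv, rfl⟩ := hu
  simpa using hl v hv

theorem star_rev_iff {X : Set (List A)} {w : List A} :
    w.reverse ∈ star (revS X) ↔ w ∈ star X := by
  constructor
  · intro h
    have := instar_rev (X := revS X) h
    exact (by simpa using this : InStar X w)
  · exact instar_rev

theorem isSuffixCode_revS {X : Set (List A)} (h : IsPrefixCode X) : IsSuffixCode (revS X) := by
  obtain ⟨⟨x, hx⟩, hne, hpf⟩ := h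
  refine ⟨⟨x.reverse, by simpa⟩, fun w hw => by simpa using fun h' => hne _ hw (by simp [h']), ?_⟩
  · intro u hu v hv huv
    have : u.reverse = v.reverse := hpf _ hu _ hv (by simpa [List.reverse_suffix] using huv)
    simpa using congrArg List.reverse this

theorem isPrefixCode_revS {X : Set (List A)} (h : IsSuffixCode X) : IsPrefixCode (revS X) := by
  obtain ⟨⟨x, hx⟩, hne, hpf⟩ := h
  refine ⟨⟨x.reverse, by simpa⟩, fun w hw => by simpa using fun h' => hne _ hw (by simp [h']), ?_⟩
  · intro u hu v hv huv
    have : u.reverse = v.reverse := hpf _ hu _ hv (by simpa [List.reverse_prefix] using huv)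
    simpa using congrArg List.reverse this

theorem isParse_rev {X : Set (List A)} {w : List A} {p : List A × List A × List A}
    (h : IsParse X w p) :
    IsParse (revS X) w.reverse (p.2.2.reverse, p.2.1.reverse, p.1.reverse) := by
  obtain ⟨h1, h2, h3, h4⟩ := h
  refine ⟨?_, ?_, instar_rev h3, ?_⟩
  · rw [← h1]; simp [List.reverse_append, List.append_assoc]
  · rintro ⟨s, hs, hsuf⟩
    refine h4 ⟨s.reverse, hs, ?_⟩
    exact (List.reverse_suffix (l₁ := s.reverse) (l₂ := p.2.2)).1 (by simpa using hsuf)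
  · rintro ⟨s, hs, hpre⟩
    refine h2 ⟨s.reverse, hs, ?_⟩
    exact (List.reverse_prefix (l₁ := s.reverse) (l₂ := p.1)).1 (by simpa using hpre)

theorem delta_rev (X : Set (List A)) (w : List A) : delta (revS X) w.reverse = delta X w := by
  unfold delta
  have himg : {p | IsParse (revS X) w.reverse p} =
      (fun p : List A × List A × List A => (p.2.2.reverse, p.2.1.reverse, p.1.reverse)) ''
        {p | IsParse X w p} := by
    ext ⟨v, x, u⟩
    constructor
    · intro h
      have h2 := isParse_rev (X := revS X) h
      simp only [revS_revS, List.reverse_reverse] at h2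
      exact ⟨(u.reverse, x.reverse, v.reverse), h2, by simp⟩
    · rintro ⟨q, hq, heq⟩
      exact heq ▸ isParse_rev hq
  rw [himg, Set.ncard_image_of_injective]
  intro a b hab
  simp only [Prod.mk.injEq] at hab
  obtain ⟨h1, h2, h3⟩ := hab
  exact Prod.ext (by simpa using congrArg List.reverse h3)
    (Prod.ext (by simpa using congrArg List.reverse h2) (by simpa using congrArg List.reverse h1))

theorem recurrent_revS {F : Set (List A)} (h : Recurrent F) : Recurrent (revS F) := by
  obtain ⟨hfac, ⟨w, hw⟩, hne, hrec⟩ := h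
  refine ⟨?_, ⟨w.reverse, by simpa⟩, ?_, ?_⟩
  · intro w hw u hu
    exact hfac w.reverse hw u.reverse (by simpa [List.reverse_infix] using hu.reverse)
  · intro hcon
    apply hne
    ext v
    constructor
    · intro hv
      have : v.reverse ∈ revS F := by simpa using hv
      rw [hcon] at this
      simpa using congrArg List.reverse (by simpa using this : v.reverse = ([] : List A))
    · intro hv
      simp only [Set.mem_singleton_iff] at hv
      subst hv
      have : ([] : List A).reverse ∈ revS F := by
        rw [hcon]; rfl
      simpa using this
  · intro u hu v hv
    obtain ⟨m, hm⟩ := hrec v.reverse hv u.reverse hu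
    refine ⟨m.reverse, ?_⟩
    show (u ++ m.reverse ++ v).reverse ∈ F
    simpa [List.reverse_append, List.append_assoc] using hm

end Stmt13Aux
namespace Stmt13Aux
open PaperDefs

variable {A : Type*}

/-- left-unitarity of `X*` for a suffix code. -/
theorem star_unit_left {X : Set (List A)} (hS : IsSuffixCode X) {p q : List A}
    (hq : q ∈ star X) (hpq : p ++ q ∈ star X) : p ∈ star X := by
  rw [← star_rev_iff]
  have h1 : q.reverse ∈ star (revS X) := (star_rev_iff).2 hq
  have h2 : q.reverse ++ p.reverse ∈ star (revS X) := by
    have := (star_rev_iff (X := X) (w := p ++ q)).2 hpq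
    simpa [List.reverse_append] using this
  exact star_unit_right (isPrefixCode_revS hS) h1 h2

theorem star_last {X : Set (List A)} {w : List A} (hw : w ∈ star X) (hne : w ≠ []) :
    ∃ x ∈ X, x <:+ w := by
  obtain ⟨x, hx, r, _, hw'⟩ := star_first ((star_rev_iff (X := X)).2 hw)
    (by simpa using fun h => hne (by simpa using congrArg List.reverse h))
  refine ⟨x.reverse, hx, ?_⟩
  have : w.reverse.reverse = (x ++ r).reverse := congrArg List.reverse hw'
  simp only [List.reverse_reverse, List.reverse_append] at this
  exact this ▸ List.suffix_append r.reverse x.reverse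

/-- greedy decomposition: longest `X*`-prefix. -/
theorem exists_greedy (X : Set (List A)) (hne : ∀ w ∈ X, w ≠ []) (w' : List A) :
    ∃ x u', x ∈ star X ∧ w' = x ++ u' ∧ ¬∃ s ∈ X, s <+: u' := by
  set S : Set ℕ := {n | ∃ x : List A, x.length = n ∧ x <+: w' ∧ x ∈ star X} with hS
  have hSne : S.Nonempty := ⟨0, [], rfl, ⟨w', rfl⟩, star_nil X⟩
  have hSbdd : BddAbove S := by
    refine ⟨w'.length, ?_⟩
    rintro n ⟨x, rfl, hx, _⟩
    exact hx.length_le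
  obtain ⟨x, hlen, hxpre, hxstar⟩ := Nat.sSup_mem hSne hSbdd
  obtain ⟨u', rfl⟩ := hxpre
  refine ⟨x, u', hxstar, rfl, ?_⟩
  rintro ⟨s, hs, ⟨t, rfl⟩⟩
  have hmem : (x ++ s).length ∈ S :=
    ⟨x ++ s, rfl, ⟨t, by simp [List.append_assoc]⟩, star_append hxstar (star_single hs)⟩
  have hle : (x ++ s).length ≤ sSup S := le_csSup hSbdd hmem
  rw [← hlen] at hle
  simp only [List.length_append] at hle
  have : s ≠ [] := hne s hs
  have : 0 < s.length := List.length_pos_iff.2 this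
  omega

/-- uniqueness of the decomposition `x ++ u'` with `x ∈ X*`, `u'` with no prefix in `X`. -/
theorem decomp_unique {X : Set (List A)} (hP : IsPrefixCode X) {x₁ u₁ x₂ u₂ : List A}
    (hx₁ : x₁ ∈ star X) (hx₂ : x₂ ∈ star X)
    (h₁ : ¬∃ s ∈ X, s <+: u₁) (h₂ : ¬∃ s ∈ X, s <+: u₂)
    (heq : x₁ ++ u₁ = x₂ ++ u₂) : x₁ = x₂ ∧ u₁ = u₂ := by
  have key : ∀ y₁ v₁ y₂ v₂ : List A, y₁ ∈ star X → y₂ ∈ star X →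
      (¬∃ s ∈ X, s <+: v₁) → (¬∃ s ∈ X, s <+: v₂) → y₁ ++ v₁ = y₂ ++ v₂ →
      y₁.length ≤ y₂.length → y₁ = y₂ ∧ v₁ = v₂ := by
    intro y₁ v₁ y₂ v₂ hy₁ hy₂ hv₁ hv₂ he hlen
    have hpre : y₁ <+: y₂ :=
      List.prefix_of_prefix_length_le ⟨v₁, he⟩ ⟨v₂, rfl⟩ hlen
    obtain ⟨s, rfl⟩ := hpre
    have hs : s ∈ star X := star_unit_right hP hy₁ hy₂
    have hv : v₁ = s ++ v₂ := by
      rw [List.append_assoc] at he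
      exact List.append_cancel_left he
    rcases eq_or_ne s [] with rfl | hsne
    · simp at hv ⊢
      exact hv
    · exfalso
      obtain ⟨b, hb, r, _, rfl⟩ := star_first hs hsne
      exact hv₁ ⟨b, hb, by rw [hv, List.append_assoc]; exact ⟨r ++ v₂, rfl⟩⟩
  rcases le_total x₁.length x₂.length with h | h
  · exact key _ _ _ _ hx₁ hx₂ h₁ h₂ heq h
  · have := key _ _ _ _ hx₂ hx₁ h₂ h₁ heq.symm h
    exact ⟨this.1.symm, this.2.symm⟩

theorem prefixSet_finite (u : List A) (P : List A → Prop) : {v | v <+: u ∧ P v}.Finite := by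
  apply Set.Finite.subset ((Set.finite_Iic u.length).image (fun n => u.take n))
  rintro v ⟨hv, _⟩
  exact ⟨v.length, by simpa using hv.length_le, (List.prefix_iff_eq_take.1 hv).symm⟩

theorem suffixSet_finite (u : List A) (P : List A → Prop) : {v | v <:+ u ∧ P v}.Finite := by
  apply Set.Finite.subset ((Set.finite_Iic u.length).image (fun n => u.drop n))
  rintro v ⟨hv, _⟩
  exact ⟨u.length - v.length, by simp, (List.suffix_iff_eq_drop.1 hv).symm⟩

/-- the prefix formula for the number of parses. -/
theorem delta_eq_prefix_count {X : Set (List A)} (hP : IsPrefixCode X) (u : List A) :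
    delta X u = {v | v <+: u ∧ ¬∃ s ∈ X, s <:+ v}.ncard := by
  have himg : (fun p : List A × List A × List A => p.1) '' {p | IsParse X u p} =
      {v | v <+: u ∧ ¬∃ s ∈ X, s <:+ v} := by
    ext v
    constructor
    · rintro ⟨⟨v', x, u'⟩, ⟨heq, h2, h3, h4⟩, rfl⟩
      exact ⟨⟨x ++ u', by rw [← heq]; simp [List.append_assoc]⟩, h2⟩
    · rintro ⟨⟨w', rfl⟩, hv⟩
      obtain ⟨x, u', hx, rfl, hnopre⟩ := exists_greedy X hP.2.1 w'
      exact ⟨(v, x, u'), ⟨by simp [List.append_assoc], hv, hx, hnopre⟩, rfl⟩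
  have hinj : Set.InjOn (fun p : List A × List A × List A => p.1) {p | IsParse X u p} := by
    rintro ⟨v₁, x₁, u₁⟩ h₁ ⟨v₂, x₂, u₂⟩ h₂ h
    simp only at h
    subst h
    obtain ⟨he₁, _, hx₁, hp₁⟩ := h₁
    obtain ⟨he₂, _, hx₂, hp₂⟩ := h₂
    have : x₁ ++ u₁ = x₂ ++ u₂ := by
      apply List.append_cancel_left (as := v₁)
      rw [← List.append_assoc, ← List.append_assoc, he₁, he₂]
    obtain ⟨hx, hu⟩ := decomp_unique hP hx₁ hx₂ hp₁ hp₂ this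
    simp only [Prod.mk.injEq]
    exact ⟨trivial, hx, hu⟩
  rw [delta, ← Set.ncard_image_of_injOn hinj, himg]

/-- the suffix formula for the number of parses. -/
theorem delta_eq_suffix_count {X : Set (List A)} (hS : IsSuffixCode X) (u : List A) :
    delta X u = {v | v <:+ u ∧ ¬∃ s ∈ X, s <+: v}.ncard := by
  rw [← delta_rev X u, delta_eq_prefix_count (isPrefixCode_revS hS)]
  have : {v | v <+: u.reverse ∧ ¬∃ s ∈ revS X, s <:+ v} =
      List.reverse '' {v | v <:+ u ∧ ¬∃ s ∈ X, s <+: v} := by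
    ext v
    constructor
    · rintro ⟨hpre, hnosuf⟩
      refine ⟨v.reverse, ⟨?_, ?_⟩, by simp⟩
      · exact (List.reverse_prefix (l₁ := v.reverse) (l₂ := u)).1 (by simpa using hpre)
      · rintro ⟨s, hs, hsp⟩
        exact hnosuf ⟨s.reverse, by simpa using hs,
          (List.reverse_prefix (l₁ := s.reverse) (l₂ := v)).1 (by simpa using hsp)⟩
    · rintro ⟨w, ⟨hsuf, hnopre⟩, rfl⟩
      constructor
      · exact (List.reverse_prefix (l₁ := w) (l₂ := u)).2 hsuf
      · rintro ⟨s, hs, hsp⟩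
        refine hnopre ⟨s.reverse, hs, ?_⟩
        exact (List.reverse_suffix (l₁ := s.reverse) (l₂ := w)).1 (by simpa using hsp)
  rw [this, Set.ncard_image_of_injective _ List.reverse_injective]

theorem delta_mono_right {X : Set (List A)} (hP : IsPrefixCode X) (u t : List A) :
    delta X u ≤ delta X (u ++ t) := by
  rw [delta_eq_prefix_count hP, delta_eq_prefix_count hP]
  apply Set.ncard_le_ncard
  · rintro v ⟨hv, h⟩
    exact ⟨hv.trans (List.prefix_append u t), h⟩
  · exact prefixSet_finite _ _

theorem delta_mono_left {X : Set (List A)} (hS : IsSuffixCode X) (s u : List A) :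
    delta X u ≤ delta X (s ++ u) := by
  rw [delta_eq_suffix_count hS, delta_eq_suffix_count hS]
  apply Set.ncard_le_ncard
  · rintro v ⟨hv, h⟩
    exact ⟨hv.trans (List.suffix_append s u), h⟩
  · exact suffixSet_finite _ _

theorem delta_nil {X : Set (List A)} (hne : ∀ w ∈ X, w ≠ []) : delta X ([] : List A) = 1 := by
  have : {p | IsParse X ([] : List A) p} = {(([] : List A), ([] : List A), ([] : List A))} := by
    ext ⟨v, x, u⟩
    simp only [Set.mem_setOf_eq, Set.mem_singleton_iff, Prod.mk.injEq]
    constructor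
    · rintro ⟨heq, _, _, _⟩
      have h1 := List.append_eq_nil_iff.1 heq
      have h2 := List.append_eq_nil_iff.1 h1.1
      exact ⟨h2.1, h2.2, h1.2⟩
    · rintro ⟨rfl, rfl, rfl⟩
      refine ⟨rfl, ?_, ⟨[], by simp, rfl⟩, ?_⟩
      · rintro ⟨s, hs, hsuf⟩
        exact hne s hs (List.suffix_nil.1 hsuf)
      · rintro ⟨s, hs, hpre⟩
        exact hne s hs (List.prefix_nil.1 hpre)
  rw [delta, this, Set.ncard_singleton]

end Stmt13Aux
namespace Stmt13Aux
open PaperDefs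

variable {A : Type*}

theorem nil_mem_of_recurrent {F : Set (List A)} (hF : Recurrent F) : ([] : List A) ∈ F := by
  obtain ⟨w, hw⟩ := hF.2.1
  exact hF.1 w hw [] List.nil_infix

theorem delta_le_of_Fdeg {X F : Set (List A)} {d : ℕ} (hd : Fdeg X F = (d : ℕ∞)) :
    ∀ w ∈ F, delta X w ≤ d := by
  intro w hw
  have : (delta X w : ℕ∞) ≤ Fdeg X F := le_iSup₂ (f := fun w _ => ((delta X w : ℕ∞))) w hw
  rw [hd] at this
  exact_mod_cast this

theorem exists_delta_max {X F : Set (List A)} (hF : Recurrent F)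
    (hne : ∀ w ∈ X, w ≠ []) {d : ℕ} (hd : Fdeg X F = (d : ℕ∞)) :
    ∃ w ∈ F, delta X w = d := by
  have hd1 : 1 ≤ d := by
    have := delta_le_of_Fdeg hd [] (nil_mem_of_recurrent hF)
    rw [delta_nil hne] at this
    exact this
  by_contra hcon
  push_neg at hcon
  have hub : Fdeg X F ≤ ((d - 1 : ℕ) : ℕ∞) := by
    apply iSup₂_le
    intro w hw
    have h1 := delta_le_of_Fdeg hd w hw
    have h2 := hcon w hw
    exact_mod_cast (by omega : delta X w ≤ d - 1)
  rw [hd] at hub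
  have : d ≤ d - 1 := by exact_mod_cast hub
  omega

/-- every word of `F` is right-completable into `X*`. -/
theorem right_completable {X F : Set (List A)} (hP : IsPrefixCode X) (hS : IsSuffixCode X)
    (hF : Recurrent F) {d : ℕ} (hdle : ∀ w ∈ F, delta X w ≤ d) :
    ∀ v ∈ F, ∃ z, v ++ z ∈ star X := by
  classical
  have main : ∀ n : ℕ, ∀ v ∈ F, v.length ≤ n → ∃ z, v ++ z ∈ star X := by
    intro n
    induction n with
    | zero =>
      intro v _ hlen
      have : v = [] := List.length_eq_zero_iff.1 (Nat.le_zero.1 hlen)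
      exact ⟨[], by simp [this, star_nil]⟩
    | succ n ih =>
      intro v hv hlen
      by_cases hpre : ∃ x ∈ X, x <+: v
      · obtain ⟨x, hxX, v₂, rfl⟩ := hpre
        have hv₂F : v₂ ∈ F := hF.1 _ hv v₂ (List.infix_iff_prefix_suffix.2 ⟨v₂, List.prefix_rfl,
          List.suffix_append x v₂⟩)
        have hlen₂ : v₂.length ≤ n := by
          have hx0 : 0 < x.length := List.length_pos_iff.2 (hP.2.1 x hxX)
          simp only [List.length_append] at hlen
          omega
        obtain ⟨z, hz⟩ := ih v₂ hv₂F hlen₂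
        exact ⟨z, by rw [List.append_assoc]; exact star_cons hxX hz⟩
      by_cases hext : ∃ x ∈ X, v <+: x
      · obtain ⟨x, hxX, w, rfl⟩ := hext
        exact ⟨w, star_single hxX⟩
      · exfalso
        push_neg at hpre hext
        have hvne : v ≠ [] := by
          rintro rfl
          obtain ⟨x, hx⟩ := hP.1
          exact hext x hx ⟨x, rfl⟩
        -- grow words with many v-prefixed suffixes
        have grow : ∀ k : ℕ, ∃ w ∈ F, ∃ T : Finset (List A),
            T.card = k + 1 ∧ ∀ σ ∈ T, σ <:+ w ∧ v <+: σ := by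
          intro k
          induction k with
          | zero =>
            exact ⟨v, hv, {v}, by simp, by simp⟩
          | succ k ihk =>
            obtain ⟨w, hw, T, hcard, hT⟩ := ihk
            obtain ⟨r, hr⟩ := hF.2.2.2 w hw v hv
            refine ⟨w ++ r ++ v, hr, insert v (T.image (· ++ (r ++ v))), ?_, ?_⟩
            · rw [Finset.card_insert_of_notMem, Finset.card_image_of_injective]
              · omega
              · intro a b hab
                exact List.append_cancel_right hab
              · intro hmem
                obtain ⟨σ, hσ, hσe⟩ := Finset.mem_image.1 hmem
                have h1 : v.length ≤ σ.length := ((hT σ hσ).2).length_le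
                have := congrArg List.length hσe
                simp only [List.length_append] at this
                have hv0 : 0 < v.length := List.length_pos_iff.2 hvne
                omega
            · intro σ hσ
              rcases Finset.mem_insert.1 hσ with hσv | hσim
              · rw [hσv]
                exact ⟨List.suffix_append (w ++ r) v, List.prefix_rfl⟩
              · obtain ⟨σ', hσmem, heq⟩ := Finset.mem_image.1 hσim
                obtain ⟨hsuf, hpre'⟩ := hT σ' hσmem
                rw [← heq]
                constructor
                · obtain ⟨p, hp⟩ := hsuf
                  exact ⟨p, by rw [← List.append_assoc, hp, List.append_assoc]⟩
                · exact hpre'.trans (List.prefix_append σ' (r ++ v))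
        obtain ⟨w, hw, T, hcard, hT⟩ := grow d
        have hsub : (T : Set (List A)) ⊆ {σ | σ <:+ w ∧ ¬∃ s ∈ X, s <+: σ} := by
          intro σ hσ
          obtain ⟨hsuf, hpre'⟩ := hT σ hσ
          refine ⟨hsuf, ?_⟩
          rintro ⟨s, hsX, hsp⟩
          rcases List.prefix_or_prefix_of_prefix hsp hpre' with h | h
          · exact hpre s hsX h
          · exact hext s hsX h
        have hle : d + 1 ≤ delta X w := by
          rw [delta_eq_suffix_count hS]
          calc d + 1 = T.card := hcard.symm
            _ = (T : Set (List A)).ncard := (Set.ncard_coe_finset T).symm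
            _ ≤ _ := Set.ncard_le_ncard hsub (suffixSet_finite _ _)
        have := hdle w hw
        omega
  intro v hv
  exact main v.length v hv le_rfl

/-- every word of `F` is left-completable into `X*`. -/
theorem left_completable {X F : Set (List A)} (hP : IsPrefixCode X) (hS : IsSuffixCode X)
    (hF : Recurrent F) {d : ℕ} (hdle : ∀ w ∈ F, delta X w ≤ d) :
    ∀ v ∈ F, ∃ z, z ++ v ∈ star X := by
  intro v hv
  have hdle' : ∀ w ∈ revS F, delta (revS X) w ≤ d := by
    intro w hw
    have : delta (revS X) w = delta X w.reverse := by
      have := delta_rev X w.reverse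
      simpa using this
    rw [this]
    exact hdle w.reverse hw
  obtain ⟨z, hz⟩ := right_completable (isPrefixCode_revS hS) (isSuffixCode_revS hP)
    (recurrent_revS hF) hdle' v.reverse (by simpa using hv)
  refine ⟨z.reverse, ?_⟩
  rw [← star_rev_iff]
  simpa [List.reverse_append] using hz

/-- a word of maximal parse number is not an internal factor of `X`. -/
theorem not_internal {X F : Set (List A)} (hP : IsPrefixCode X) (hS : IsSuffixCode X)
    (hF : Recurrent F) (hXF : X ⊆ F) {d : ℕ} (hdle : ∀ w ∈ F, delta X w ≤ d)
    {u : List A} (hδ : delta X u = d)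
    {x : List A} (hx : x ∈ X) {s t : List A} (hst : x = s ++ u ++ t) : s = [] ∨ t = [] := by
  by_contra hcon
  push_neg at hcon
  obtain ⟨hsne, htne⟩ := hcon
  have hsuF : s ++ u ∈ F := hF.1 x (hXF hx) (s ++ u) ⟨[], t, by simp [hst]⟩
  have h1 : delta X (s ++ u) ≤ d := hdle _ hsuF
  have h2 : d ≤ delta X (s ++ u) := hδ ▸ delta_mono_left hS s u
  have hC : {w | w <:+ s ++ u ∧ ¬∃ p ∈ X, p <+: w} = {w | w <:+ u ∧ ¬∃ p ∈ X, p <+: w} := by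
    apply (Set.eq_of_subset_of_ncard_le _ _ (suffixSet_finite _ _)).symm
    · rintro w ⟨hsuf, h⟩
      exact ⟨hsuf.trans (List.suffix_append s u), h⟩
    · have e1 : {w | w <:+ s ++ u ∧ ¬∃ p ∈ X, p <+: w}.ncard = delta X (s ++ u) :=
        (delta_eq_suffix_count hS _).symm
      have e2 : {w | w <:+ u ∧ ¬∃ p ∈ X, p <+: w}.ncard = delta X u :=
        (delta_eq_suffix_count hS _).symm
      rw [e1, e2, hδ]
      omega
  -- s ++ u must have a prefix in X
  have hsu : ∃ p ∈ X, p <+: s ++ u := by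
    by_contra hno
    have : s ++ u ∈ {w | w <:+ s ++ u ∧ ¬∃ p ∈ X, p <+: w} := ⟨List.suffix_rfl, hno⟩
    rw [hC] at this
    have := this.1.length_le
    simp only [List.length_append] at this
    have : s.length = 0 := by omega
    exact hsne (List.length_eq_zero_iff.1 this)
  obtain ⟨p, hpX, hppre⟩ := hsu
  have hpx : p <+: x := hppre.trans ⟨t, hst.symm⟩
  have hpeq : p = x := hP.2.2 p hpX x hx hpx
  have : x.length ≤ s.length + u.length := by
    rw [← hpeq]
    have := hppre.length_le
    simpa using this
  rw [hst] at this
  simp only [List.length_append] at this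
  have ht0 : 0 < t.length := List.length_pos_iff.2 htne
  omega

end Stmt13Aux
namespace Stmt13Aux
open PaperDefs

variable {A : Type*}

theorem mem_leftQuot {L : Set (List A)} {y w : List A} : w ∈ leftQuot L y ↔ y ++ w ∈ L := Iff.rfl

theorem stepW_leftQuot (L : Set (List A)) (y v : List A) :
    stepW (leftQuot L y) v = leftQuot L (y ++ v) := by
  ext w
  simp [stepW, leftQuot, List.append_assoc]

theorem stepW_stepW (q : Set (List A)) (a b : List A) :
    stepW (stepW q a) b = stepW q (a ++ b) := by
  ext w
  simp [stepW, List.append_assoc]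

theorem stepW_nil (q : Set (List A)) : stepW q ([] : List A) = q := by
  ext w; simp [stepW]

theorem stepW_empty (v : List A) : stepW (∅ : Set (List A)) v = ∅ := by
  ext w; simp [stepW]

/-- the set of images of states under the action of `v`. -/
def imgSet (L : Set (List A)) (v : List A) : Set (Set (List A)) :=
  {p | p.Nonempty ∧ ∃ y, p = leftQuot L (y ++ v)}

theorem wordRank_eq_imgSet (L : Set (List A)) (v : List A) :
    wordRank L v = (imgSet L v).ncard := by
  unfold wordRank
  congr 1
  ext p
  constructor
  · rintro ⟨q, ⟨⟨hqne, y, rfl⟩, hne⟩, rfl⟩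
    have hne' : (leftQuot L (y ++ v)).Nonempty := by rwa [← stepW_leftQuot]
    exact ⟨hne, y, stepW_leftQuot L y v⟩
  · rintro ⟨hne, y, rfl⟩
    refine ⟨leftQuot L y, ⟨⟨?_, y, rfl⟩, ?_⟩, ?_⟩
    · obtain ⟨z, hz⟩ := hne
      exact ⟨v ++ z, by rwa [mem_leftQuot, ← List.append_assoc]⟩
    · show (stepW (leftQuot L y) v).Nonempty
      rwa [stepW_leftQuot]
    · exact stepW_leftQuot L y v

theorem imgSet_subset_left {L : Set (List A)} (p v : List A) :
    imgSet L (p ++ v) ⊆ imgSet L v := by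
  rintro q ⟨hne, y, rfl⟩
  exact ⟨hne, y ++ p, by rw [List.append_assoc]⟩

theorem leftQuot_cancel {X : Set (List A)} (hP : IsPrefixCode X) {a w : List A}
    (ha : a ∈ star X) : leftQuot (star X) (a ++ w) = leftQuot (star X) w := by
  ext t
  simp only [mem_leftQuot]
  constructor
  · intro h
    apply star_unit_right hP ha
    rwa [List.append_assoc] at h
  · intro h
    rw [List.append_assoc]
    exact star_append ha h

section Ctx

variable {X F : Set (List A)} {d : ℕ}

/-- every live state on a non-internal `u` comes from a parse. -/
theorem cut_exists (hP : IsPrefixCode X) {u : List A}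
    (hni : ∀ x ∈ X, ∀ s t, x = s ++ u ++ t → s = [] ∨ t = []) :
    ∀ l : List (List A), (∀ b ∈ l, b ∈ X) → ∀ y z : List A, l.flatten = y ++ u ++ z →
      ∃ v, v <+: u ∧ y ++ v ∈ star X := by
  intro l
  induction l with
  | nil =>
    intro _ y z hf
    have hy : y = [] := by
      have := congrArg List.length hf
      simp only [List.flatten_nil, List.length_nil, List.length_append] at this
      exact List.length_eq_zero_iff.1 (by omega)
    exact ⟨[], ⟨u, rfl⟩, by rw [hy]; exact star_nil X⟩
  | cons b l ih =>
    intro hb y z hf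
    by_cases hy : y = []
    · exact ⟨[], ⟨u, rfl⟩, by rw [hy]; exact star_nil X⟩
    have hbX : b ∈ X := hb b (by simp)
    have hflat : b ++ l.flatten = y ++ u ++ z := by simpa using hf
    have hbpre : b <+: y ++ u ++ z := ⟨l.flatten, hflat⟩
    rcases le_or_gt b.length y.length with hle | hgt
    · have hby : b <+: y :=
        List.prefix_of_prefix_length_le hbpre
          (by rw [List.append_assoc]; exact List.prefix_append y (u ++ z)) hle
      obtain ⟨y₂, rfl⟩ := hby
      have hf₂ : l.flatten = y₂ ++ u ++ z := by
        apply List.append_cancel_left (as := b)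
        rw [hflat]
        simp [List.append_assoc]
      obtain ⟨v, hv, hstar⟩ := ih (fun x hx => hb x (by simp [hx])) y₂ z hf₂
      exact ⟨v, hv, by rw [List.append_assoc]; exact star_cons hbX hstar⟩
    · rcases le_or_gt b.length (y.length + u.length) with hle2 | hgt2
      · have hyb : y <+: b :=
          List.prefix_of_prefix_length_le
            (by rw [List.append_assoc]; exact List.prefix_append y (u ++ z)) hbpre hgt.le
        obtain ⟨v, rfl⟩ := hyb
        have hvu : v <+: u := by
          have h1 : v ++ l.flatten = u ++ z := by
            apply List.append_cancel_left (as := y)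
            rw [← List.append_assoc, hflat, List.append_assoc]
          have h2 : v <+: u ++ z := ⟨l.flatten, h1⟩
          refine List.prefix_of_prefix_length_le h2 (List.prefix_append u z) ?_
          simp only [List.length_append] at hle2
          omega
        exact ⟨v, hvu, star_single hbX⟩
      · exfalso
        have hyub : y ++ u <+: b := by
          refine List.prefix_of_prefix_length_le (List.prefix_append (y ++ u) z) hbpre ?_
          simp only [List.length_append]
          omega
        obtain ⟨t', hbt⟩ := hyub
        have ht' : t' ≠ [] := by
          intro h
          rw [h, List.append_nil] at hbt
          have := congrArg List.length hbt
          simp only [List.length_append] at this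
          omega
        rcases hni b hbX y t' (by rw [← hbt]) with h | h
        · exact hy h
        · exact ht' h
  
/-- the state of a live `y` equals the state of a parse. -/
theorem state_eq_parse (hP : IsPrefixCode X) (hS : IsSuffixCode X) {u : List A}
    (hni : ∀ x ∈ X, ∀ s t, x = s ++ u ++ t → s = [] ∨ t = [])
    {y : List A} (hlive : (leftQuot (star X) (y ++ u)).Nonempty) :
    ∃ p, IsParse X u p ∧ leftQuot (star X) (y ++ u) = leftQuot (star X) (p.2.1 ++ p.2.2) := by
  obtain ⟨z, hz⟩ := hlive
  rw [mem_leftQuot] at hz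
  have hz' : y ++ u ++ z ∈ star X := by rwa [List.append_assoc, ← List.append_assoc]
  obtain ⟨l, hl, hfl⟩ := hz'
  have hPP : ∃ v, v <+: u ∧ y ++ v ∈ star X := cut_exists hP hni l hl y z hfl
  -- take a shortest such v
  set NS : Set ℕ := {n | ∃ v, (v <+: u ∧ y ++ v ∈ star X) ∧ v.length = n} with hNS
  have hNSne : NS.Nonempty := by
    obtain ⟨v, hv⟩ := hPP
    exact ⟨v.length, v, hv, rfl⟩
  obtain ⟨v, ⟨hvu, hvstar⟩, hvlen⟩ := Nat.sInf_mem hNSne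
  have hmin : ∀ v', v' <+: u → y ++ v' ∈ star X → v.length ≤ v'.length := by
    intro v' h1 h2
    rw [hvlen]
    exact Nat.sInf_le ⟨v', ⟨h1, h2⟩, rfl⟩
  have hnosuf : ¬∃ s ∈ X, s <:+ v := by
    rintro ⟨s, hsX, ⟨v₁, rfl⟩⟩
    have hstar₁ : y ++ v₁ ∈ star X := by
      apply star_unit_left hS (star_single hsX)
      rwa [List.append_assoc]
    have h1 : v₁ <+: u := (List.prefix_append v₁ s).trans hvu
    have := hmin v₁ h1 hstar₁
    have hs0 : 0 < s.length := List.length_pos_iff.2 (hP.2.1 s hsX)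
    simp only [List.length_append] at this
    omega
  obtain ⟨w', rfl⟩ := hvu
  obtain ⟨x, u', hxstar, rfl, hnopre⟩ := exists_greedy X hP.2.1 w'
  refine ⟨(v, x, u'), ⟨by simp [List.append_assoc], hnosuf, hxstar, hnopre⟩, ?_⟩
  have hre : y ++ (v ++ (x ++ u')) = (y ++ v) ++ (x ++ u') := by simp [List.append_assoc]
  rw [hre, leftQuot_cancel hP hvstar]

end Ctx

end Stmt13Aux
namespace Stmt13Aux
open PaperDefs

variable {A : Type*} {X F : Set (List A)} {d : ℕ}

theorem imgSet_finite {L : Set (List A)}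
    (hQfin : {q : Set (List A) | ∃ y, q = leftQuot L y}.Finite) (v : List A) :
    (imgSet L v).Finite := by
  apply hQfin.subset
  rintro q ⟨_, y, rfl⟩
  exact ⟨y ++ v, rfl⟩

theorem theta_mem (hP : IsPrefixCode X) (hS : IsSuffixCode X) (hF : Recurrent F)
    (hdle : ∀ w ∈ F, delta X w ≤ d) {u : List A} (hu : u ∈ F)
    {p : List A × List A × List A} (hp : IsParse X u p) :
    leftQuot (star X) (p.2.1 ++ p.2.2) ∈ imgSet (star X) u := by
  obtain ⟨v, x, u'⟩ := p
  obtain ⟨heq, h2, h3, h4⟩ := hp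
  simp only at heq h2 h3 h4 ⊢
  have hu'F : u' ∈ F := hF.1 u hu u' ⟨v ++ x, [], by rw [← heq]; simp [List.append_assoc]⟩
  have hvF : v ∈ F := hF.1 u hu v ⟨[], x ++ u', by rw [← heq]; simp [List.append_assoc]⟩
  constructor
  · obtain ⟨z, hz⟩ := right_completable hP hS hF hdle u' hu'F
    refine ⟨z, ?_⟩
    rw [mem_leftQuot, List.append_assoc]
    exact star_append h3 hz
  · obtain ⟨z₀, hz₀⟩ := left_completable hP hS hF hdle v hvF
    refine ⟨z₀, ?_⟩
    rw [show z₀ ++ u = (z₀ ++ v) ++ (x ++ u') from by rw [← heq]; simp [List.append_assoc],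
      leftQuot_cancel hP hz₀]

theorem theta_inj (hP : IsPrefixCode X) (hS : IsSuffixCode X) (hF : Recurrent F)
    (hdle : ∀ w ∈ F, delta X w ≤ d) {u : List A} (hu : u ∈ F) :
    Set.InjOn (fun p : List A × List A × List A => leftQuot (star X) (p.2.1 ++ p.2.2))
      {p | IsParse X u p} := by
  have key : ∀ p₁ ∈ {p | IsParse X u p}, ∀ p₂ ∈ {p | IsParse X u p},
      p₁.1.length < p₂.1.length →
      leftQuot (star X) (p₁.2.1 ++ p₁.2.2) ≠ leftQuot (star X) (p₂.2.1 ++ p₂.2.2) := by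
    rintro ⟨v₁, x₁, u₁⟩ h₁ ⟨v₂, x₂, u₂⟩ h₂ hlt heq
    obtain ⟨he₁, hn₁, hx₁, hp₁⟩ := h₁
    obtain ⟨he₂, hn₂, hx₂, hp₂⟩ := h₂
    simp only at he₁ he₂ hn₁ hn₂ hx₁ hx₂ hp₁ hp₂ heq hlt
    have hpre₁ : v₁ <+: u := ⟨x₁ ++ u₁, by rw [← he₁]; simp [List.append_assoc]⟩
    have hpre₂ : v₂ <+: u := ⟨x₂ ++ u₂, by rw [← he₂]; simp [List.append_assoc]⟩
    have hv12 : v₁ <+: v₂ := List.prefix_of_prefix_length_le hpre₁ hpre₂ hlt.le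
    obtain ⟨s, rfl⟩ := hv12
    have hsne : s ≠ [] := by
      intro h
      rw [h] at hlt
      simp at hlt
    have hcancel : x₁ ++ u₁ = s ++ (x₂ ++ u₂) := by
      apply List.append_cancel_left (as := v₁)
      rw [show v₁ ++ (x₁ ++ u₁) = v₁ ++ x₁ ++ u₁ from by simp [List.append_assoc], he₁,
        ← he₂]
      simp [List.append_assoc]
    have hu₂F : u₂ ∈ F := hF.1 u hu u₂ ⟨(v₁ ++ s) ++ x₂, [], by rw [← he₂]; simp [List.append_assoc]⟩
    obtain ⟨z, hz⟩ := right_completable hP hS hF hdle u₂ hu₂F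
    have hz₂ : (x₂ ++ u₂) ++ z ∈ star X := by
      rw [List.append_assoc]
      exact star_append hx₂ (by assumption)
    have hz₁ : (x₁ ++ u₁) ++ z ∈ star X := by
      have : z ∈ leftQuot (star X) (x₂ ++ u₂) := hz₂
      rw [← heq] at this
      exact this
    have hsstar : s ∈ star X := by
      apply star_unit_left hS hz₂
      rwa [hcancel, List.append_assoc] at hz₁
    obtain ⟨b, hbX, hbs⟩ := star_last hsstar hsne
    exact hn₂ ⟨b, hbX, hbs.trans (List.suffix_append v₁ s)⟩
  rintro p₁ h₁ p₂ h₂ heq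
  rcases lt_trichotomy p₁.1.length p₂.1.length with h | h | h
  · exact absurd heq (key p₁ h₁ p₂ h₂ h)
  · -- equal v-lengths
    obtain ⟨v₁, x₁, u₁⟩ := p₁
    obtain ⟨v₂, x₂, u₂⟩ := p₂
    obtain ⟨he₁, hn₁, hx₁, hp₁⟩ := h₁
    obtain ⟨he₂, hn₂, hx₂, hp₂⟩ := h₂
    simp only at he₁ he₂ hx₁ hp₁ hx₂ hp₂ h
    have hpre₁ : v₁ <+: u := ⟨x₁ ++ u₁, by rw [← he₁]; simp [List.append_assoc]⟩
    have hpre₂ : v₂ <+: u := ⟨x₂ ++ u₂, by rw [← he₂]; simp [List.append_assoc]⟩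
    have hv : v₁ = v₂ :=
      (List.prefix_of_prefix_length_le hpre₁ hpre₂ h.le).eq_of_length h
    subst hv
    have hcancel : x₁ ++ u₁ = x₂ ++ u₂ := by
      apply List.append_cancel_left (as := v₁)
      rw [show v₁ ++ (x₁ ++ u₁) = v₁ ++ x₁ ++ u₁ from by simp [List.append_assoc], he₁, ← he₂]
      simp [List.append_assoc]
    obtain ⟨hx, hu'⟩ := decomp_unique hP hx₁ hx₂ hp₁ hp₂ hcancel
    simp only [Prod.mk.injEq]
    exact ⟨trivial, hx, hu'⟩
  · exact absurd heq.symm (key p₂ h₂ p₁ h₁ h)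

theorem rank_eq_delta_of_not_internal (hP : IsPrefixCode X) (hS : IsSuffixCode X)
    (hF : Recurrent F) (hdle : ∀ w ∈ F, delta X w ≤ d) {u : List A} (hu : u ∈ F)
    (hni : ∀ x ∈ X, ∀ s t, x = s ++ u ++ t → s = [] ∨ t = []) :
    wordRank (star X) u = delta X u := by
  rw [wordRank_eq_imgSet]
  have himg : imgSet (star X) u =
      (fun p : List A × List A × List A => leftQuot (star X) (p.2.1 ++ p.2.2)) ''
        {p | IsParse X u p} := by
    ext q
    constructor
    · rintro ⟨hne, y, rfl⟩
      obtain ⟨p, hp, hq⟩ := state_eq_parse hP hS hni hne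
      exact ⟨p, hp, hq.symm⟩
    · rintro ⟨p, hp, rfl⟩
      exact theta_mem hP hS hF hdle hu hp
  rw [himg, Set.ncard_image_of_injOn (theta_inj hP hS hF hdle hu)]
  rfl

theorem rank_eq_of_delta_max (hP : IsPrefixCode X) (hS : IsSuffixCode X)
    (hF : Recurrent F) (hXF : X ⊆ F) (hdle : ∀ w ∈ F, delta X w ≤ d) {u : List A}
    (hu : u ∈ F) (hδ : delta X u = d) : wordRank (star X) u = d := by
  rw [rank_eq_delta_of_not_internal hP hS hF hdle hu
    (fun x hx s t hst => not_internal hP hS hF hXF hdle hδ hx hst), hδ]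

theorem rank_ge (hP : IsPrefixCode X) (hS : IsSuffixCode X)
    (hF : Recurrent F) (hXF : X ⊆ F) (hdle : ∀ w ∈ F, delta X w ≤ d)
    (hmax : ∃ w ∈ F, delta X w = d)
    (hQfin : {q : Set (List A) | ∃ y, q = leftQuot (star X) y}.Finite)
    {u : List A} (hu : u ∈ F) : d ≤ wordRank (star X) u := by
  obtain ⟨w₀, hw₀F, hw₀δ⟩ := hmax
  obtain ⟨r, hr⟩ := hF.2.2.2 w₀ hw₀F u hu
  have hδW : delta X (w₀ ++ r ++ u) = d := by
    apply le_antisymm (hdle _ hr)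
    rw [← hw₀δ]
    have := delta_mono_right hP w₀ (r ++ u)
    rwa [← List.append_assoc] at this
  have hrW : wordRank (star X) (w₀ ++ r ++ u) = d :=
    rank_eq_of_delta_max hP hS hF hXF hdle hr hδW
  calc d = (imgSet (star X) (w₀ ++ r ++ u)).ncard := by rw [← wordRank_eq_imgSet, hrW]
    _ ≤ (imgSet (star X) u).ncard := by
        exact Set.ncard_le_ncard (imgSet_subset_left (L := star X) (w₀ ++ r) u)
          (imgSet_finite hQfin u)
    _ = wordRank (star X) u := (wordRank_eq_imgSet _ _).symm

end Stmt13Aux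
namespace Stmt13Aux
open PaperDefs

variable {A : Type*} {X F : Set (List A)} {d : ℕ}

theorem leftQuot_eq_of_eta {L : Set (List A)} {M : Type*} [Monoid M] {η : List A → M}
    (hη : IsSyntacticHom L η) {a b : List A} (h : η a = η b) (x : List A) :
    leftQuot L (x ++ a) = leftQuot L (x ++ b) := by
  have hsyn := (hη.syn a b).1 h
  ext w
  exact hsyn x w

theorem eta_eq_of_leftQuot {L : Set (List A)} {M : Type*} [Monoid M] {η : List A → M}
    (hη : IsSyntacticHom L η) {a b : List A}
    (h : ∀ x, leftQuot L (x ++ a) = leftQuot L (x ++ b)) : η a = η b :=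
  (hη.syn a b).2 (fun x y => Set.ext_iff.1 (h x) y)

theorem quots_finite {L : Set (List A)} {M : Type*} [Monoid M] [Finite M] {η : List A → M}
    (hη : IsSyntacticHom L η) : {q : Set (List A) | ∃ y, q = leftQuot L y}.Finite := by
  have hsub : {q : Set (List A) | ∃ y, q = leftQuot L y} ⊆
      Set.range (fun m : M => leftQuot L (Classical.choose (hη.surj m))) := by
    rintro q ⟨y, rfl⟩
    refine ⟨η y, ?_⟩
    have hc : η (Classical.choose (hη.surj (η y))) = η y := Classical.choose_spec (hη.surj (η y))
    have := leftQuot_eq_of_eta hη hc []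
    simpa using this
  exact (Set.finite_range _).subset hsub

theorem imgSet_eta {L : Set (List A)} {M : Type*} [Monoid M] {η : List A → M}
    (hη : IsSyntacticHom L η) {a b : List A} (h : η a = η b) :
    imgSet L a = imgSet L b := by
  ext q
  constructor
  · rintro ⟨hne, y, rfl⟩
    exact ⟨hne, y, leftQuot_eq_of_eta hη h y⟩
  · rintro ⟨hne, y, rfl⟩
    exact ⟨hne, y, leftQuot_eq_of_eta hη h.symm y⟩

theorem wordRank_eta {L : Set (List A)} {M : Type*} [Monoid M] {η : List A → M}
    (hη : IsSyntacticHom L η) {a b : List A} (h : η a = η b) :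
    wordRank L a = wordRank L b := by
  rw [wordRank_eq_imgSet, wordRank_eq_imgSet, imgSet_eta hη h]

/-- the key lemma: a word of `F` of minimal rank is `J`-below every word of `F`. -/
theorem jle_of_rank (hP : IsPrefixCode X) (hS : IsSuffixCode X) (hF : Recurrent F)
    (hXF : X ⊆ F) (hdle : ∀ w ∈ F, delta X w ≤ d) (hmax : ∃ w ∈ F, delta X w = d)
    {MX : Type*} [Monoid MX] [Finite MX] {η : List A → MX}
    (hη : IsSyntacticHom (star X) η) {u : List A} (hu : u ∈ F)
    (hrank : wordRank (star X) u = d) : ∀ w ∈ F, JLe (η u) (η w) := by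
  intro w hw
  set L := star X with hL
  have hQfin := quots_finite hη
  obtain ⟨t, ht⟩ := hF.2.2.2 w hw u hu
  set W := w ++ t ++ u with hW
  obtain ⟨r, hr⟩ := hF.2.2.2 W ht W ht
  set S := imgSet L u with hSdef
  have hSfin : S.Finite := imgSet_finite hQfin u
  have hScard : S.ncard = d := by rw [← wordRank_eq_imgSet]; exact hrank
  set c := r ++ W with hc
  set g := fun q : Set (List A) => stepW q c with hg
  have hVsubS : imgSet L (W ++ r ++ W) ⊆ S := by
    rintro q ⟨hne, y, rfl⟩
    refine ⟨hne, y ++ (W ++ r ++ w ++ t), ?_⟩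
    congr 1
    simp [hW, List.append_assoc]
  have hWsubS : imgSet L W ⊆ S := by
    rintro q ⟨hne, y, rfl⟩
    exact ⟨hne, y ++ (w ++ t), by congr 1; simp [hW, List.append_assoc]⟩
  have hVcard : (imgSet L (W ++ r ++ W)).ncard = d := by
    apply le_antisymm
    · rw [← hScard]
      exact Set.ncard_le_ncard hVsubS hSfin
    · rw [← wordRank_eq_imgSet]
      exact rank_ge hP hS hF hXF hdle hmax hQfin hr
  have hVS : imgSet L (W ++ r ++ W) = S :=
    Set.eq_of_subset_of_ncard_le hVsubS (by rw [hVcard, hScard]) hSfin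
  have hgmem : ∀ q ∈ S, g q ∈ S ∪ {∅} := by
    rintro q ⟨hne, y, rfl⟩
    have hq : g (leftQuot L (y ++ u)) = leftQuot L ((y ++ u ++ r ++ w ++ t) ++ u) := by
      simp only [hg]
      rw [stepW_leftQuot]
      congr 1
      simp [hc, hW, List.append_assoc]
    rcases Set.eq_empty_or_nonempty (g (leftQuot L (y ++ u))) with h | h
    · right; exact h
    · left
      rw [hq] at h ⊢
      exact ⟨h, y ++ u ++ r ++ w ++ t, rfl⟩
  have hsurj : S ⊆ g '' S := by
    intro q hq
    rw [← hVS] at hq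
    obtain ⟨hne, y, rfl⟩ := hq
    have hyW : leftQuot L (y ++ (W ++ r ++ W)) = g (leftQuot L (y ++ W)) := by
      simp only [hg]
      rw [stepW_leftQuot]
      congr 1
      simp [hc, List.append_assoc]
    refine ⟨leftQuot L (y ++ W), hWsubS ⟨?_, y, rfl⟩, hyW.symm⟩
    obtain ⟨z, hz⟩ := hne
    refine ⟨r ++ W ++ z, ?_⟩
    rw [mem_leftQuot] at hz ⊢
    rw [show (y ++ W) ++ (r ++ W ++ z) = (y ++ (W ++ r ++ W)) ++ z from by
      simp [List.append_assoc]]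
    exact hz
  have hgS : g '' S = S := by
    have himg_sub : g '' S ⊆ S ∪ {∅} := by
      rintro _ ⟨q, hq, rfl⟩
      exact hgmem q hq
    have hfin' : (g '' S).Finite := hSfin.image g
    have hnot : (∅ : Set (List A)) ∉ g '' S := by
      intro hEmp
      have hins : insert (∅ : Set (List A)) S ⊆ g '' S := by
        rintro q hq
        rcases Set.mem_insert_iff.1 hq with rfl | hq
        · exact hEmp
        · exact hsurj hq
      have hc1 : (insert (∅ : Set (List A)) S).ncard ≤ (g '' S).ncard :=
        Set.ncard_le_ncard hins hfin'
      have hc2 : (g '' S).ncard ≤ S.ncard := Set.ncard_image_le hSfin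
      rw [Set.ncard_insert_of_notMem (fun hmem => Set.not_nonempty_empty hmem.1) hSfin] at hc1
      omega
    apply Set.Subset.antisymm _ hsurj
    intro q hq
    rcases himg_sub hq with h | h
    · exact h
    · rw [Set.mem_singleton_iff] at h
      exact absurd (h ▸ hq) hnot
  have hmaps : Set.MapsTo g S S := fun q hq => hgS ▸ Set.mem_image_of_mem g hq
  have hinj : Set.InjOn g S := ((hSfin.surjOn_iff_bijOn_of_mapsTo hmaps).1 hsurj).2.1
  haveI : Finite ↥S := hSfin.to_subtype
  let m : ↥S → ↥S := fun q => ⟨g q.1, hmaps q.2⟩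
  have hmbij : Function.Bijective m := by
    constructor
    · intro a b hab
      exact Subtype.ext (hinj a.2 b.2 (congrArg Subtype.val hab))
    · intro q
      obtain ⟨p, hp, hgp⟩ := hsurj q.2
      exact ⟨⟨p, hp⟩, Subtype.ext hgp⟩
  let π : Equiv.Perm ↥S := Equiv.ofBijective m hmbij
  set k := orderOf π with hk
  have hkpos : 0 < k := orderOf_pos π
  have hπk : π ^ k = 1 := pow_orderOf_eq_one π
  set wrep : ℕ → List A := fun n => (List.replicate n c).flatten with hwrep
  have hwrepS : ∀ n, wrep (n + 1) = c ++ wrep n := by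
    intro n
    simp [hwrep, List.replicate_succ]
  have hiter : ∀ n (q : ↥S), stepW q.1 (wrep n) = ((π ^ n) q : Set (List A)) := by
    intro n
    induction n with
    | zero =>
      intro q
      rw [show wrep 0 = [] from rfl, stepW_nil, pow_zero]
      rfl
    | succ n ihn =>
      intro q
      rw [hwrepS, ← stepW_stepW]
      have h1 : stepW q.1 c = ((π q : ↥S) : Set (List A)) := rfl
      rw [h1, ihn (π q), pow_succ, Equiv.Perm.mul_apply]
  have hfix : ∀ q ∈ S, stepW q (wrep k) = q := by
    intro q hq
    have := hiter k ⟨q, hq⟩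
    rw [hπk] at this
    simpa using this
  have hηeq : η (u ++ wrep k) = η u := by
    apply eta_eq_of_leftQuot hη
    intro x
    have h1 : leftQuot L (x ++ (u ++ wrep k)) = stepW (leftQuot L (x ++ u)) (wrep k) := by
      rw [stepW_leftQuot]
      congr 1
      simp [List.append_assoc]
    rw [h1]
    rcases Set.eq_empty_or_nonempty (leftQuot L (x ++ u)) with h | h
    · rw [h, stepW_empty]
    · exact hfix _ ⟨h, x, rfl⟩
  obtain ⟨k', hk'⟩ : ∃ k', k = k' + 1 := ⟨k - 1, by omega⟩
  refine ⟨η (u ++ r), η (t ++ u ++ wrep k'), ?_⟩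
  have hword : u ++ wrep k = (u ++ r) ++ w ++ (t ++ u ++ wrep k') := by
    rw [hk', hwrepS]
    simp [hc, hW, List.append_assoc]
  have hsplit : η (u ++ wrep k) = η (u ++ r) * η w * η (t ++ u ++ wrep k') := by
    rw [hword, hη.map_append ((u ++ r) ++ w) (t ++ u ++ wrep k'), hη.map_append (u ++ r) w]
  rw [← hηeq, hsplit]

end Stmt13Aux
namespace Stmt13Aux
open PaperDefs

variable {A : Type*}

theorem rank_sandwich_le {L : Set (List A)}
    (hQfin : {q : Set (List A) | ∃ y, q = leftQuot L y}.Finite) (p w q : List A) :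
    wordRank L (p ++ w ++ q) ≤ wordRank L w := by
  rw [wordRank_eq_imgSet, wordRank_eq_imgSet]
  have hsub : imgSet L (p ++ w ++ q) ⊆ (fun s => stepW s q) '' imgSet L w := by
    rintro s ⟨hne, y, rfl⟩
    refine ⟨leftQuot L ((y ++ p) ++ w), ⟨?_, y ++ p, rfl⟩, ?_⟩
    · obtain ⟨z, hz⟩ := hne
      refine ⟨q ++ z, ?_⟩
      rw [mem_leftQuot] at hz ⊢
      rw [show (y ++ p) ++ w ++ (q ++ z) = (y ++ (p ++ w ++ q)) ++ z from by
        simp [List.append_assoc]]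
      exact hz
    · show stepW (leftQuot L ((y ++ p) ++ w)) q = leftQuot L (y ++ (p ++ w ++ q))
      rw [stepW_leftQuot]
      congr 1
      simp [List.append_assoc]
  calc (imgSet L (p ++ w ++ q)).ncard
      ≤ ((fun s => stepW s q) '' imgSet L w).ncard :=
        Set.ncard_le_ncard hsub ((imgSet_finite hQfin w).image _)
    _ ≤ (imgSet L w).ncard := Set.ncard_image_le (imgSet_finite hQfin w)

end Stmt13Aux

open PaperDefs Stmt13Aux in
theorem stmt_13 {A : Type} [Fintype A]
    (F X : Set (List A)) (hF : Recurrent F)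
    (hX : IsFMaximalBifixCode F X) (hrat : IsRational X)
    {MX : Type} [Monoid MX] [Finite MX] {ηX : List A → MX}
    (hηX : IsSyntacticHom (star X) ηX)
    (u : List A) (hu : u ∈ F) (d : ℕ) (hd : Fdeg X F = (d : ℕ∞)) :
    (wordRank (star X) u = d ↔ InFMinJ ηX F (ηX u)) ∧
    (delta X u = d → wordRank (star X) u = d) := by
  have hP : IsPrefixCode X := hX.1.1
  have hS : IsSuffixCode X := hX.1.2
  have hXF : X ⊆ F := hX.2.1
  have hdle : ∀ w ∈ F, delta X w ≤ d := delta_le_of_Fdeg hd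
  have hmax : ∃ w ∈ F, delta X w = d := exists_delta_max hF hP.2.1 hd
  have hQfin := quots_finite hηX
  constructor
  · constructor
    · intro hrank
      exact ⟨⟨u, hu, ⟨1, 1, by rw [one_mul, mul_one]⟩, ⟨1, 1, by rw [one_mul, mul_one]⟩⟩,
        fun w hw => jle_of_rank hP hS hF hXF hdle hmax hηX hu hrank w hw⟩
    · intro hmin
      obtain ⟨w₀, hw₀F, hw₀δ⟩ := hmax
      obtain ⟨x, y, hxy⟩ := hmin.2 w₀ hw₀F
      obtain ⟨p, hp⟩ := hηX.surj x
      obtain ⟨q, hq⟩ := hηX.surj y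
      have heta : ηX u = ηX (p ++ w₀ ++ q) := by
        rw [hxy, ← hp, ← hq, ← hηX.map_append p w₀, ← hηX.map_append (p ++ w₀) q]
      have h1 : wordRank (star X) u = wordRank (star X) (p ++ w₀ ++ q) :=
        wordRank_eta hηX heta
      have h2 : wordRank (star X) (p ++ w₀ ++ q) ≤ wordRank (star X) w₀ :=
        rank_sandwich_le hQfin p w₀ q
      have h3 : wordRank (star X) w₀ = d := rank_eq_of_delta_max hP hS hF hXF hdle hw₀F hw₀δ
      have h4 : d ≤ wordRank (star X) u :=
        rank_ge hP hS hF hXF hdle ⟨w₀, hw₀F, hw₀δ⟩ hQfin hu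
      omega
  · intro hδ
    exact rank_eq_of_delta_max hP hS hF hXF hdle hu hδ
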